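/- For every real number t with 0 < |t|, the Fourier transform (characteristic function) of the logistic density satisfies ∫_{-∞}^{∞} e^{i t u} (π/2) sech²(π u) du = (t/2) · csch(t/2) = (t/2)/sinh(t/2); for t = 0 the integral equals 1. -/

import Mathlib

open MeasureTheory Real Set

noncomputable def lgCdf (u : ℝ) : ℝ := 1 / (1 + Real.exp (-(2 * π * u)))
noncomputable def lgPdf (u : ℝ) : ℝ := π / 2 * (1 / Real.cosh (π * u)) ^ 2

lemma lgDenom_pos (u : ℝ) : 0 < 1 + Real.exp (-(2 * π * u)) := by positivity

lemma lgDenom_eq (u : ℝ) :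
    1 + Real.exp (-(2 * π * u)) = 2 * Real.exp (-(π * u)) * Real.cosh (π * u) := by
  rw [Real.cosh_eq,
    show 2 * Real.exp (-(π * u)) * ((Real.exp (π * u) + Real.exp (-(π * u))) / 2)
      = Real.exp (-(π * u) + π * u) + Real.exp (-(π * u) + -(π * u)) by
      rw [Real.exp_add, Real.exp_add]; ring,
    show -(π * u) + π * u = 0 by ring, show -(π * u) + -(π * u) = -(2 * π * u) by ring,
    Real.exp_zero]

lemma lg_hasDerivAt (u : ℝ) : HasDerivAt lgCdf (lgPdf u) u := by
  have hlin : HasDerivAt (fun u : ℝ => -(2 * π * u)) (-(2 * π)) u := by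
    simpa using (hasDerivAt_id u).const_mul (-(2 * π))
  have hexp := hlin.exp
  have hden : HasDerivAt (fun u : ℝ => 1 + Real.exp (-(2 * π * u)))
      (Real.exp (-(2 * π * u)) * -(2 * π)) u := hexp.const_add 1
  have h := hden.inv (lgDenom_pos u).ne'
  have : HasDerivAt lgCdf
      (Real.exp (-(2 * π * u)) * (2 * π) / (1 + Real.exp (-(2 * π * u))) ^ 2) u := by
    unfold lgCdf
    simpa [one_div, Pi.inv_def] using h
  convert this using 1
  rw [lgPdf, lgDenom_eq]
  have h2 : Real.exp (-(2 * π * u)) = Real.exp (-(π * u)) * Real.exp (-(π * u)) := by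
    rw [← Real.exp_add]; ring_nf
  rw [h2]
  field_simp [(Real.cosh_pos (π * u)).ne', Real.exp_ne_zero]

lemma lgPdf_pos (u : ℝ) : 0 < lgPdf u := by
  have := Real.cosh_pos (π * u)
  rw [lgPdf]; positivity

lemma lg_strictMono : StrictMono lgCdf :=
  strictMono_of_deriv_pos fun u => by
    rw [(lg_hasDerivAt u).deriv]; exact lgPdf_pos u

lemma lg_mem_Ioo (u : ℝ) : lgCdf u ∈ Ioo (0:ℝ) 1 := by
  have h := Real.exp_pos (-(2 * π * u))
  constructor
  · rw [lgCdf]; positivity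
  · rw [lgCdf, div_lt_one (lgDenom_pos u)]; linarith

lemma lg_image : lgCdf '' univ = Ioo (0:ℝ) 1 := by
  apply Subset.antisymm
  · rintro y ⟨u, -, rfl⟩; exact lg_mem_Ioo u
  · rintro y ⟨hy0, hy1⟩
    refine ⟨-Real.log (1 / y - 1) / (2 * π), trivial, ?_⟩
    have h1 : (0:ℝ) < 1 / y - 1 := by
      rw [sub_pos, lt_one_div (by norm_num) hy0]; simpa using hy1
    have h2 : -(2 * π * (-Real.log (1 / y - 1) / (2 * π))) = Real.log (1 / y - 1) := by
      field_simp
    rw [lgCdf, h2, Real.exp_log h1]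
    field_simp
    ring

lemma one_sub_lg (u : ℝ) :
    1 - lgCdf u = Real.exp (-(2 * π * u)) / (1 + Real.exp (-(2 * π * u))) := by
  rw [lgCdf]; field_simp; ring

lemma lg_ratio (u : ℝ) : lgCdf u / (1 - lgCdf u) = Real.exp (2 * π * u) := by
  rw [one_sub_lg, lgCdf, Real.exp_neg]
  have h := Real.exp_pos (2 * π * u)
  field_simp

noncomputable def lgc (t : ℝ) : ℂ := ((t / (2 * π) : ℝ) : ℂ) * Complex.I

noncomputable def lgF (t : ℝ) (y : ℝ) : ℂ :=
  (y : ℂ) ^ (1 + lgc t - 1) * (1 - (y : ℂ)) ^ (1 - lgc t - 1)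

lemma lg_key (t u : ℝ) :
    |lgPdf u| • lgF t (lgCdf u) =
      Complex.exp (Complex.I * (t : ℂ) * (u : ℂ)) *
        (((π / 2) * (1 / Real.cosh (π * u)) ^ 2 : ℝ) : ℂ) := by
  obtain ⟨h0, h1⟩ := lg_mem_Ioo u
  have h1' : (0:ℝ) < 1 - lgCdf u := by linarith
  have e1 : 1 + lgc t - 1 = lgc t := by ring
  have e2 : 1 - lgc t - 1 = -lgc t := by ring
  have b1 : ((lgCdf u : ℝ) : ℂ) ≠ 0 := by
    exact_mod_cast ne_of_gt h0
  have b2 : (1 : ℂ) - ((lgCdf u : ℝ) : ℂ) ≠ 0 := by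
    rw [show (1:ℂ) - ((lgCdf u : ℝ):ℂ) = (((1 - lgCdf u : ℝ)):ℂ) by push_cast; ring]
    exact_mod_cast ne_of_gt h1'
  rw [lgF, e1, e2, Complex.cpow_def_of_ne_zero b1, Complex.cpow_def_of_ne_zero b2,
    show (1:ℂ) - ((lgCdf u : ℝ):ℂ) = (((1 - lgCdf u : ℝ)):ℂ) by push_cast; ring,
    ← Complex.ofReal_log h0.le, ← Complex.ofReal_log h1'.le,
    ← Complex.exp_add]
  have hπ : ((π : ℝ) : ℂ) ≠ 0 := Complex.ofReal_ne_zero.mpr Real.pi_ne_zero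
  have harg : ((Real.log (lgCdf u) : ℝ) : ℂ) * lgc t +
      ((Real.log (1 - lgCdf u) : ℝ) : ℂ) * -lgc t = Complex.I * (t : ℂ) * (u : ℂ) := by
    rw [show ((Real.log (lgCdf u) : ℝ) : ℂ) * lgc t +
        ((Real.log (1 - lgCdf u) : ℝ) : ℂ) * -lgc t
        = lgc t * (((Real.log (lgCdf u) - Real.log (1 - lgCdf u) : ℝ)) : ℂ) by
      push_cast; ring]
    rw [← Real.log_div (ne_of_gt h0) (ne_of_gt h1'), lg_ratio, Real.log_exp, lgc]
    push_cast
    field_simp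
  rw [harg, Complex.real_smul, abs_of_pos (lgPdf_pos u), mul_comm]
  rfl

lemma lgc_re_add (t : ℝ) : 0 < (1 + lgc t).re ∧ 0 < (1 - lgc t).re := by
  have h : (lgc t).re = 0 := by
    rw [lgc, Complex.mul_re, Complex.ofReal_re, Complex.ofReal_im, Complex.I_re, Complex.I_im]
    ring
  constructor <;> simp [Complex.add_re, Complex.sub_re, h]

lemma lgF_integrableOn (t : ℝ) : IntegrableOn (lgF t) (Ioo (0:ℝ) 1) := by
  obtain ⟨h1, h2⟩ := lgc_re_add t
  have h := Complex.betaIntegral_convergent h1 h2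
  rw [intervalIntegrable_iff_integrableOn_Ioo_of_le zero_le_one] at h
  exact h

lemma lg_main (t : ℝ) :
    Integrable (fun u : ℝ =>
      Complex.exp (Complex.I * (t : ℂ) * (u : ℂ)) *
        (((π / 2) * (1 / Real.cosh (π * u)) ^ 2 : ℝ) : ℂ)) ∧
    (∫ u : ℝ, Complex.exp (Complex.I * (t : ℂ) * (u : ℂ)) *
        (((π / 2) * (1 / Real.cosh (π * u)) ^ 2 : ℝ) : ℂ)) =
      Complex.betaIntegral (1 + lgc t) (1 - lgc t) := by
  have hder : ∀ x ∈ (univ : Set ℝ), HasDerivWithinAt lgCdf (lgPdf x) univ x :=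
    fun x _ => (lg_hasDerivAt x).hasDerivWithinAt
  have hinj : InjOn lgCdf univ := lg_strictMono.injective.injOn
  have hIm : lgCdf '' univ = Ioo (0:ℝ) 1 := lg_image
  have hfun : (fun u => |lgPdf u| • lgF t (lgCdf u)) =
      (fun u : ℝ => Complex.exp (Complex.I * (t : ℂ) * (u : ℂ)) *
        (((π / 2) * (1 / Real.cosh (π * u)) ^ 2 : ℝ) : ℂ)) := funext fun u => lg_key t u
  constructor
  · have h := (integrableOn_image_iff_integrableOn_abs_deriv_smul MeasurableSet.univ
      hder hinj (lgF t)).mp (hIm ▸ lgF_integrableOn t)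
    rwa [integrableOn_univ, hfun] at h
  · have h := integral_image_eq_integral_abs_deriv_smul MeasurableSet.univ hder hinj (lgF t)
    rw [hIm, hfun, setIntegral_univ] at h
    rw [← h, Complex.betaIntegral, intervalIntegral.integral_of_le zero_le_one,
      integral_Ioc_eq_integral_Ioo]
    rfl

lemma lg_beta_eval {t : ℝ} (ht : t ≠ 0) :
    Complex.betaIntegral (1 + lgc t) (1 - lgc t) =
      ((t : ℂ) / 2) * (1 / Complex.sinh ((t : ℂ) / 2)) := by
  obtain ⟨h1, h2⟩ := lgc_re_add t
  have hπ : ((π : ℝ) : ℂ) ≠ 0 := Complex.ofReal_ne_zero.mpr Real.pi_ne_zero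
  have hc : lgc t ≠ 0 := by
    rw [lgc]
    exact mul_ne_zero (Complex.ofReal_ne_zero.mpr
      (div_ne_zero ht (by positivity))) Complex.I_ne_zero
  have hG := Complex.Gamma_mul_Gamma_eq_betaIntegral h1 h2
  rw [show (1 + lgc t) + (1 - lgc t) = 2 by ring] at hG
  have hΓ2 : Complex.Gamma 2 = 1 := by
    rw [show (2:ℂ) = 1 + 1 by norm_num, Complex.Gamma_add_one 1 one_ne_zero,
      Complex.Gamma_one, mul_one]
  have hadd : Complex.Gamma (1 + lgc t) = lgc t * Complex.Gamma (lgc t) := by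
    rw [add_comm]; exact Complex.Gamma_add_one _ hc
  have hrefl := Complex.Gamma_mul_Gamma_one_sub (lgc t)
  have hβ : Complex.betaIntegral (1 + lgc t) (1 - lgc t)
      = lgc t * (((π : ℝ) : ℂ) / Complex.sin (((π : ℝ) : ℂ) * lgc t)) := by
    rw [← hrefl, ← mul_assoc, ← hadd, hG, hΓ2, one_mul]
  have hsin : Complex.sin (((π : ℝ) : ℂ) * lgc t)
      = Complex.sinh (((t / 2 : ℝ) : ℂ)) * Complex.I := by
    rw [show ((π : ℝ) : ℂ) * lgc t = ((t / 2 : ℝ) : ℂ) * Complex.I by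
      rw [lgc]; push_cast; field_simp, Complex.sin_mul_I]
  have hs : Real.sinh (t / 2) ≠ 0 :=
    Real.sinh_ne_zero.mpr (div_ne_zero ht two_ne_zero)
  have hs' : Complex.sinh (((t / 2 : ℝ) : ℂ)) ≠ 0 := by
    rw [← Complex.ofReal_sinh]
    exact Complex.ofReal_ne_zero.mpr hs
  rw [hβ, hsin, lgc, show ((t : ℂ) / 2) = ((t / 2 : ℝ) : ℂ) by push_cast; ring]
  field_simp [hs', Complex.I_ne_zero]
  have hs2 : Complex.sinh ((t : ℂ) / 2) ≠ 0 := by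
    rwa [show ((t : ℂ) / 2) = ((t / 2 : ℝ) : ℂ) by push_cast; ring]
  have hA : (2 : ℂ) * (π : ℂ) * (Complex.sinh ((t : ℂ) / 2) * Complex.I) ≠ 0 :=
    mul_ne_zero (mul_ne_zero two_ne_zero hπ) (mul_ne_zero hs2 Complex.I_ne_zero)
  have hB : (2 : ℂ) * Complex.sinh ((t : ℂ) / 2) ≠ 0 := mul_ne_zero two_ne_zero hs2
  rw [← Complex.ofReal_mul, div_mul_eq_mul_div, mul_div_mul_right _ _ Real.pi_ne_zero]

/-- The characteristic function of the logistic density `u ↦ (π/2) sech²(π u)`: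
for `0 < |t|` it equals `(t/2)·csch(t/2) = (t/2)/sinh(t/2)`, and for `t = 0` the
integral equals `1`; the integral is absolutely convergent (integrable integrand). -/
theorem statement_0 (t : ℝ) :
    Integrable (fun u : ℝ =>
      Complex.exp (Complex.I * (t : ℂ) * (u : ℂ)) *
        (((π / 2) * (1 / Real.cosh (π * u)) ^ 2 : ℝ) : ℂ)) ∧
    (0 < |t| →
      (∫ u : ℝ, Complex.exp (Complex.I * (t : ℂ) * (u : ℂ)) *
          (((π / 2) * (1 / Real.cosh (π * u)) ^ 2 : ℝ) : ℂ)) =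
        ((t : ℂ) / 2) * (1 / Complex.sinh ((t : ℂ) / 2)) ∧
      ((t : ℂ) / 2) * (1 / Complex.sinh ((t : ℂ) / 2)) =
        ((t : ℂ) / 2) / Complex.sinh ((t : ℂ) / 2)) ∧
    (t = 0 →
      (∫ u : ℝ, Complex.exp (Complex.I * (t : ℂ) * (u : ℂ)) *
          (((π / 2) * (1 / Real.cosh (π * u)) ^ 2 : ℝ) : ℂ)) = 1) := by
  obtain ⟨hint, heq⟩ := lg_main t
  refine ⟨hint, fun ht => ⟨?_, mul_one_div _ _⟩, fun ht => ?_⟩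
  · have ht' : t ≠ 0 := by
      intro h; rw [h] at ht; simp at ht
    rw [heq]; exact lg_beta_eval ht'
  · rw [heq, show lgc t = 0 by simp [lgc, ht], add_zero, sub_zero]
    have := Complex.betaIntegral_eval_one_right (u := (1:ℂ)) (by norm_num)
    simpa using this
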